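/- Every hedonic game satisfying bottom responsiveness admits a strongly individually stable (hence core stable) partition. -/

import Mathlib

open Finset

abbrev Pref (N : Type*) := N → Finset N → Finset N → Prop

def SPref {N : Type*} (pref : Pref N) (i : N) (S T : Finset N) : Prop :=
  pref i S T ∧ ¬ pref i T S

def IsHedonic {N : Type*} (pref : Pref N) : Prop :=
  (∀ (i : N) (S T : Finset N), i ∈ S → i ∈ T → pref i S T ∨ pref i T S) ∧
  (∀ (i : N) (S T U : Finset N), pref i S T → pref i T U → pref i S U)

section Defs

variable {N : Type*} [DecidableEq N] [Fintype N]

def IsPartition (π : N → Finset N) : Prop :=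
  (∀ i, i ∈ π i) ∧ ∀ i j, j ∈ π i → π j = π i

def Reachable (π π' : N → Finset N) (H : Finset N) : Prop :=
  π' ≠ π ∧ ∀ i j, i ∉ H → j ∉ H → i ≠ j → (π i = π j ↔ π' i = π' j)

def WeaklyBlocks (pref : Pref N) (π : N → Finset N) (S : Finset N) : Prop :=
  (∀ i ∈ S, pref i S (π i)) ∧ ∃ j ∈ S, SPref pref j S (π j)

def StrictCoreStable (pref : Pref N) (π : N → Finset N) : Prop :=
  ∀ S : Finset N, ¬ WeaklyBlocks pref π S

def Blocks (pref : Pref N) (π : N → Finset N) (S : Finset N) : Prop :=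
  S.Nonempty ∧ ∀ i ∈ S, SPref pref i S (π i)

def CoreStable (pref : Pref N) (π : N → Finset N) : Prop :=
  ∀ S : Finset N, ¬ Blocks pref π S

def StrongNashBlocks (pref : Pref N) (π : N → Finset N) (H : Finset N) : Prop :=
  H.Nonempty ∧ ∃ π' : N → Finset N, IsPartition π' ∧ Reachable π π' H ∧
    ∀ i ∈ H, SPref pref i (π' i) (π i)

def StrongNashStable (pref : Pref N) (π : N → Finset N) : Prop :=
  ∀ H : Finset N, ¬ StrongNashBlocks pref π H

def StronglyIndividuallyBlocks (pref : Pref N) (π : N → Finset N) (H : Finset N) : Prop :=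
  H.Nonempty ∧ ∃ π' : N → Finset N, IsPartition π' ∧ Reachable π π' H ∧
    (∀ i ∈ H, SPref pref i (π' i) (π i)) ∧
    ∀ j : N, (∃ i ∈ H, j ∈ π' i) → pref j (π' j) (π j)

def StronglyIndividuallyStable (pref : Pref N) (π : N → Finset N) : Prop :=
  ∀ H : Finset N, ¬ StronglyIndividuallyBlocks pref π H

def WeaklyNashBlocks (pref : Pref N) (π : N → Finset N) (H : Finset N) : Prop :=
  H.Nonempty ∧ ∃ π' : N → Finset N, IsPartition π' ∧ Reachable π π' H ∧
    (∀ i ∈ H, pref i (π' i) (π i)) ∧ ∃ i ∈ H, SPref pref i (π' i) (π i)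

def StrictlyStrongNashStable (pref : Pref N) (π : N → Finset N) : Prop :=
  ∀ H : Finset N, ¬ WeaklyNashBlocks pref π H

def NashStable (pref : Pref N) (π : N → Finset N) : Prop :=
  ∀ (i : N) (T : Finset N), (T = ∅ ∨ ∃ j, π j = T) → i ∉ T →
    ¬ SPref pref i (insert i T) (π i)

def IndividuallyStable (pref : Pref N) (π : N → Finset N) : Prop :=
  ∀ (i : N) (T : Finset N), (T = ∅ ∨ ∃ j, π j = T) → i ∉ T →
    ¬ (SPref pref i (insert i T) (π i) ∧ ∀ j ∈ T, pref j (insert i T) T)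

def ParetoOptimal (pref : Pref N) (π : N → Finset N) : Prop :=
  ∀ π' : N → Finset N, IsPartition π' → (∀ j, pref j (π' j) (π j)) →
    ¬ ∃ i, SPref pref i (π' i) (π i)

def PerfectPartition (pref : Pref N) (π : N → Finset N) : Prop :=
  ∀ (i : N) (S : Finset N), i ∈ S → pref i (π i) S

def ChoiceSets (pref : Pref N) (i : N) (X : Finset N) : Set (Finset N) :=
  {S' | S' ⊆ X ∧ i ∈ S' ∧ ∀ S'' ⊆ X, i ∈ S'' → pref i S' S''}

def TopResponsiveWith (pref : Pref N) (ch : N → Finset N → Finset N) : Prop :=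
  (∀ (i : N) (X : Finset N), i ∈ X → ChoiceSets pref i X = {ch i X}) ∧
  (∀ (i : N) (X Y : Finset N), i ∈ X → i ∈ Y →
      SPref pref i (ch i X) (ch i Y) → SPref pref i X Y) ∧
  (∀ (i : N) (X Y : Finset N), i ∈ X → i ∈ Y →
      ch i X = ch i Y → X ⊂ Y → SPref pref i X Y)

def MutualTop (ch : N → Finset N → Finset N) : Prop :=
  ∀ (i j : N) (X : Finset N), i ∈ X → j ∈ X → (i ∈ ch j X ↔ j ∈ ch i X)

def AvoidSets (pref : Pref N) (i : N) (X : Finset N) : Set (Finset N) :=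
  {S' | S' ⊆ X ∧ i ∈ S' ∧ ∀ S'' ⊆ X, i ∈ S'' → pref i S'' S'}

def BottomResponsive (pref : Pref N) : Prop :=
  (∀ (i : N) (X Y : Finset N), i ∈ X → i ∈ Y →
      (∀ X' ∈ AvoidSets pref i X, ∀ Y' ∈ AvoidSets pref i Y, SPref pref i X' Y') →
      SPref pref i X Y) ∧
  (∀ (i : N) (X Y : Finset N), i ∈ X → i ∈ Y →
      (AvoidSets pref i X ∩ AvoidSets pref i Y).Nonempty → Y.card ≤ X.card → pref i X Y)

def StrongBottomResponsiveWith (pref : Pref N) (av : N → Finset N → Finset N) : Prop :=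
  BottomResponsive pref ∧
    ∀ (i : N) (X : Finset N), i ∈ X → AvoidSets pref i X = {av i X}

def MutualBottom (av : N → Finset N → Finset N) : Prop :=
  ∀ (i j : N) (X : Finset N), i ∈ X → j ∈ X → (i ∈ av j X ↔ j ∈ av i X)

end Defs

section BRAux

variable {N : Type*} [DecidableEq N] [Fintype N]

/-- A coalition is clean (for `pref`) if every member weakly prefers every subcoalition
containing them to being alone. -/
def Clean (pref : Pref N) (C : Finset N) : Prop :=
  ∀ i ∈ C, ∀ S ⊆ C, i ∈ S → pref i S {i}

lemma clean_singleton (pref : Pref N) (hG : IsHedonic pref) (i : N) :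
    Clean pref {i} := by
  intro j hj S hS hjS
  have hji : j = i := Finset.mem_singleton.1 hj
  subst hji
  rcases Finset.subset_singleton_iff.1 hS with rfl | rfl
  · exact absurd hjS (Finset.notMem_empty j)
  · rcases hG.1 j {j} {j} hjS hjS with h | h <;> exact h

lemma exists_maxClean (pref : Pref N) (R : Finset N) :
    ∃ C, C ⊆ R ∧ Clean pref C ∧ ∀ C' ⊆ R, Clean pref C' → C'.card ≤ C.card := by
  classical
  obtain ⟨C, hC, hmax⟩ :=
    Finset.exists_max_image (R.powerset.filter fun C => Clean pref C) Finset.card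
      ⟨∅, by rw [Finset.mem_filter]; exact ⟨Finset.empty_mem_powerset R, fun i hi => absurd hi (Finset.notMem_empty i)⟩⟩
  simp only [Finset.mem_filter, Finset.mem_powerset] at hC
  refine ⟨C, hC.1, hC.2, fun C' hC' hcl => hmax C' ?_⟩
  simp [Finset.mem_filter, Finset.mem_powerset, hC', hcl]

noncomputable def maxClean (pref : Pref N) (R : Finset N) : Finset N :=
  (exists_maxClean pref R).choose

lemma maxClean_subset (pref : Pref N) (R : Finset N) : maxClean pref R ⊆ R :=
  (exists_maxClean pref R).choose_spec.1

lemma maxClean_clean (pref : Pref N) (R : Finset N) : Clean pref (maxClean pref R) :=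
  (exists_maxClean pref R).choose_spec.2.1

lemma maxClean_max (pref : Pref N) (R : Finset N) :
    ∀ C' ⊆ R, Clean pref C' → C'.card ≤ (maxClean pref R).card :=
  (exists_maxClean pref R).choose_spec.2.2

noncomputable def stage (pref : Pref N) : ℕ → Finset N
  | 0 => Finset.univ
  | k + 1 => stage pref k \ maxClean pref (stage pref k)

lemma stage_succ (pref : Pref N) (k : ℕ) :
    stage pref (k + 1) = stage pref k \ maxClean pref (stage pref k) := rfl

lemma stage_anti (pref : Pref N) {k l : ℕ} (h : k ≤ l) :
    stage pref l ⊆ stage pref k := by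
  induction l, h using Nat.le_induction with
  | base => exact Finset.Subset.refl _
  | succ l hl ih => exact (Finset.sdiff_subset).trans ih

lemma maxClean_nonempty (pref : Pref N) (hG : IsHedonic pref) {R : Finset N}
    (hR : R.Nonempty) : (maxClean pref R).Nonempty := by
  obtain ⟨i, hi⟩ := hR
  have h1 : ({i} : Finset N).card ≤ (maxClean pref R).card :=
    maxClean_max pref R {i} (Finset.singleton_subset_iff.2 hi) (clean_singleton pref hG i)
  simp only [Finset.card_singleton] at h1
  exact Finset.card_pos.1 (lt_of_lt_of_le Nat.zero_lt_one h1)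

lemma exists_idx (pref : Pref N) (hG : IsHedonic pref) (i : N) :
    ∃ k, i ∈ maxClean pref (stage pref k) := by
  by_contra h
  push_neg at h
  have hmem : ∀ k, i ∈ stage pref k := by
    intro k
    induction k with
    | zero => exact Finset.mem_univ i
    | succ k ih => exact Finset.mem_sdiff.2 ⟨ih, h k⟩
  have hcard : ∀ k, (stage pref k).card + k ≤ Fintype.card N := by
    intro k
    induction k with
    | zero => simpa [stage] using le_of_eq (Finset.card_univ)
    | succ k ih =>
        have hne : (maxClean pref (stage pref k)).Nonempty :=
          maxClean_nonempty pref hG ⟨i, hmem k⟩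
        have hsub := maxClean_subset pref (stage pref k)
        have h1 : (stage pref (k + 1)).card
            = (stage pref k).card - (maxClean pref (stage pref k)).card := by
          rw [stage_succ, Finset.card_sdiff_of_subset hsub]
        have h2 : 1 ≤ (maxClean pref (stage pref k)).card := Finset.card_pos.2 hne
        have h3 : (maxClean pref (stage pref k)).card ≤ (stage pref k).card :=
          Finset.card_le_card hsub
        omega
  have := hcard (Fintype.card N + 1)
  have hpos : 0 ≤ (stage pref (Fintype.card N + 1)).card := Nat.zero_le _
  omega

noncomputable def idx (pref : Pref N) (hG : IsHedonic pref) (i : N) : ℕ :=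
  Nat.find (exists_idx pref hG i)

lemma idx_spec (pref : Pref N) (hG : IsHedonic pref) (i : N) :
    i ∈ maxClean pref (stage pref (idx pref hG i)) :=
  Nat.find_spec (exists_idx pref hG i)

lemma idx_min (pref : Pref N) (hG : IsHedonic pref) (i : N) {l : ℕ}
    (hl : l < idx pref hG i) : i ∉ maxClean pref (stage pref l) :=
  Nat.find_min (exists_idx pref hG i) hl

lemma mem_stage_of_le_idx (pref : Pref N) (hG : IsHedonic pref) {i : N} {k : ℕ}
    (h : k ≤ idx pref hG i) : i ∈ stage pref k :=
  stage_anti pref h (maxClean_subset pref _ (idx_spec pref hG i))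

lemma idx_eq_of_mem (pref : Pref N) (hG : IsHedonic pref) {i : N} {k : ℕ}
    (h : i ∈ maxClean pref (stage pref k)) : idx pref hG i = k := by
  rcases lt_trichotomy (idx pref hG i) k with hlt | heq | hgt
  · have h1 : i ∈ stage pref k := maxClean_subset pref _ h
    have h2 : stage pref k ⊆ stage pref (idx pref hG i + 1) := stage_anti pref hlt
    have h3 := h2 h1
    rw [stage_succ] at h3
    exact absurd (Finset.mem_sdiff.1 h3).2 (not_not.2 (idx_spec pref hG i))
  · exact heq
  · exact absurd h (idx_min pref hG i hgt)

lemma card_anti (pref : Pref N) {k l : ℕ} (h : k ≤ l) :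
    (maxClean pref (stage pref l)).card ≤ (maxClean pref (stage pref k)).card :=
  maxClean_max pref (stage pref k) _
    ((maxClean_subset pref _).trans (stage_anti pref h)) (maxClean_clean pref _)

lemma card_le_of_clean (pref : Pref N) (hG : IsHedonic pref) {S : Finset N} {k : ℕ}
    (hcl : Clean pref S) (h : ∀ n ∈ S, k ≤ idx pref hG n) :
    S.card ≤ (maxClean pref (stage pref k)).card :=
  maxClean_max pref (stage pref k) S
    (fun n hn => mem_stage_of_le_idx pref hG (h n hn)) hcl

/-- Key lemma: if `C` is clean and `i` weakly prefers `S` to `C`, then `S` is clean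
for `i`, i.e. every subset of `S` containing `i` is weakly preferred to `{i}`. -/
lemma cleanFor_of_pref (pref : Pref N) (hG : IsHedonic pref) (hBR : BottomResponsive pref)
    {C S : Finset N} {i : N} (hiC : i ∈ C) (hclean : Clean pref C) (hiS : i ∈ S)
    (hp : pref i S C) : ∀ T ⊆ S, i ∈ T → pref i T {i} := by
  by_contra h
  push_neg at h
  obtain ⟨T, hTS, hiT, hnp⟩ := h
  have htot := hG.1
  have htrans := hG.2
  have key : SPref pref i C S := by
    refine hBR.1 i C S hiC hiS ?_
    intro X' hX' Y' hY'
    obtain ⟨hX'C, hiX', _⟩ := hX'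
    obtain ⟨hY'S, hiY', hY'min⟩ := hY'
    have hX'i : pref i X' {i} := hclean i hiC X' hX'C hiX'
    have hTY' : pref i T Y' := hY'min T hTS hiT
    have hnY'i : ¬ pref i Y' {i} := fun hh => hnp (htrans i T Y' {i} hTY' hh)
    have hiY'' : pref i {i} Y' :=
      (htot i {i} Y' (Finset.mem_singleton_self i) hiY').resolve_right hnY'i
    exact ⟨htrans i X' {i} Y' hX'i hiY'',
      fun hh => hnY'i (htrans i Y' X' {i} hh hX'i)⟩
  exact key.2 hp

lemma singleton_mem_avoid (pref : Pref N) {S : Finset N} {i : N} (hiS : i ∈ S)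
    (h : ∀ T ⊆ S, i ∈ T → pref i T {i}) : ({i} : Finset N) ∈ AvoidSets pref i S :=
  ⟨Finset.singleton_subset_iff.2 hiS, Finset.mem_singleton_self i, h⟩

/-- Key lemma: a strictly preferred alternative to a clean coalition must be strictly
larger. -/
lemma card_lt_of_spref (pref : Pref N) (hG : IsHedonic pref) (hBR : BottomResponsive pref)
    {C S : Finset N} {i : N} (hiC : i ∈ C) (hclean : Clean pref C) (hiS : i ∈ S)
    (hsp : SPref pref i S C) : C.card < S.card := by
  have hcf := cleanFor_of_pref pref hG hBR hiC hclean hiS hsp.1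
  by_contra h
  push_neg at h
  have h1 : ({i} : Finset N) ∈ AvoidSets pref i C :=
    singleton_mem_avoid pref hiC (fun T hT hiT => hclean i hiC T hT hiT)
  have h2 : ({i} : Finset N) ∈ AvoidSets pref i S := singleton_mem_avoid pref hiS hcf
  have := hBR.2 i C S hiC hiS ⟨{i}, h1, h2⟩ h
  exact hsp.2 this

end BRAux

/-- Every hedonic game satisfying bottom responsiveness admits a strongly individually
stable (hence core stable) partition. -/
theorem bottomResponsive_SIS {N : Type*} [DecidableEq N] [Fintype N]
    (pref : Pref N) (hG : IsHedonic pref) (hBR : BottomResponsive pref) :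
    ∃ π : N → Finset N, IsPartition π ∧ StronglyIndividuallyStable pref π ∧
      CoreStable pref π := by
  classical
  set π : N → Finset N := fun i => maxClean pref (stage pref (idx pref hG i)) with hπdef
  have hπi : ∀ i, i ∈ π i := fun i => idx_spec pref hG i
  have hπeq : ∀ i j, j ∈ π i → π j = π i := by
    intro i j hj
    have : idx pref hG j = idx pref hG i := idx_eq_of_mem pref hG hj
    simp only [hπdef, this]
  have hπclean : ∀ i, Clean pref (π i) := fun i => maxClean_clean pref _
  have hpart : IsPartition π := ⟨hπi, hπeq⟩
  refine ⟨π, hpart, ?_, ?_⟩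
  · -- strongly individually stable
    rintro H ⟨hHne, π', hpart', hreach, hstrict, hweak⟩
    -- strict improvement implies a changed coalition
    have hchange : ∀ j ∈ H, π' j ≠ π j := by
      intro j hj heq
      have h := hstrict j hj
      rw [heq] at h
      exact h.2 h.1
    set K : Finset N :=
      Finset.univ.filter (fun m => π' m ≠ π m ∧ (π' m ∩ H).Nonempty) with hKdef
    have hmemK : ∀ m, m ∈ K ↔ π' m ≠ π m ∧ (π' m ∩ H).Nonempty := by
      intro m
      simp [hKdef]
    have hHK : ∀ j ∈ H, j ∈ K := by
      intro j hj
      exact (hmemK j).2 ⟨hchange j hj, ⟨j, Finset.mem_inter.2 ⟨hpart'.1 j, hj⟩⟩⟩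
    obtain ⟨i₁, hi₁⟩ := hHne
    have hKne : K.Nonempty := ⟨i₁, hHK i₁ hi₁⟩
    obtain ⟨m₀, hm₀K, hm₀min⟩ :=
      Finset.exists_min_image K (fun m => idx pref hG m) hKne
    -- every member of a coalition of a K-member is again in K
    have memK : ∀ m ∈ K, ∀ n ∈ π' m, n ∈ K := by
      intro m hm n hn
      obtain ⟨hne, i₀, hi₀⟩ := (hmemK m).1 hm
      have hπ'n : π' n = π' m := hpart'.2 m n hn
      have hchn : π' n ≠ π n := by
        intro h
        have hmn : m ∈ π n := by
          rw [← h, hπ'n]; exact hpart'.1 m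
        have h2 : π m = π n := hpart.2 n m hmn
        exact hne (by rw [← hπ'n, h, ← h2])
      refine (hmemK n).2 ⟨hchn, ?_⟩
      rw [hπ'n]
      exact ⟨i₀, hi₀⟩
    -- every member of such a coalition weakly improves
    have weakS : ∀ m ∈ K, ∀ n ∈ π' m, pref n (π' m) (π n) := by
      intro m hm n hn
      obtain ⟨-, i₀, hi₀⟩ := (hmemK m).1 hm
      have hi₀m : i₀ ∈ π' m := (Finset.mem_inter.1 hi₀).1
      have hi₀H : i₀ ∈ H := (Finset.mem_inter.1 hi₀).2
      have hpe : π' i₀ = π' m := hpart'.2 m i₀ hi₀m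
      have h := hweak n ⟨i₀, hi₀H, by rw [hpe]; exact hn⟩
      rwa [hpart'.2 m n hn] at h
    -- such coalitions are clean
    have cleanS : ∀ m ∈ K, Clean pref (π' m) := by
      intro m hm n hn T hT hnT
      exact cleanFor_of_pref pref hG hBR (hπi n) (hπclean n) hn
        (weakS m hm n hn) T hT hnT
    -- such coalitions are no larger than the coalition at the minimal index
    have cardS : ∀ m ∈ K,
        (π' m).card ≤ (maxClean pref (stage pref (idx pref hG m₀))).card := by
      intro m hm
      exact card_le_of_clean pref hG (cleanS m hm)
        (fun n hn => hm₀min n (memK m hm n hn))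
    -- every deviator sits at an index strictly above idx m₀
    have hidxH : ∀ j ∈ H, idx pref hG m₀ < idx pref hG j := by
      intro j hj
      have h1 : (π j).card < (π' j).card :=
        card_lt_of_spref pref hG hBR (hπi j) (hπclean j) (hpart'.1 j) (hstrict j hj)
      have h2 := cardS j (hHK j hj)
      by_contra h
      push_neg at h
      have h3 := card_anti pref h
      simp only [hπdef] at h1
      omega
    have hm₀H : m₀ ∉ H := fun h => lt_irrefl _ (hidxH m₀ h)
    have hCdisjH : ∀ j ∈ H, j ∉ π m₀ := by
      intro j hj hjC
      have h1 : idx pref hG j = idx pref hG m₀ := idx_eq_of_mem pref hG hjC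
      have h2 := hidxH j hj
      omega
    -- the whole coalition π m₀ moves into π' m₀
    have hCsub : π m₀ ⊆ π' m₀ := by
      intro n hn
      have hπn : π n = π m₀ := hπeq m₀ n hn
      have hnH : n ∉ H := fun h => hCdisjH n h hn
      by_cases hnm : n = m₀
      · subst hnm; exact hpart'.1 n
      · have h1 : π' n = π' m₀ := (hreach.2 n m₀ hnH hm₀H hnm).1 hπn
        rw [← h1]
        exact hpart'.1 n
    obtain ⟨-, i₀, hi₀⟩ := (hmemK m₀).1 hm₀K
    have hi₀m : i₀ ∈ π' m₀ := (Finset.mem_inter.1 hi₀).1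
    have hi₀H : i₀ ∈ H := (Finset.mem_inter.1 hi₀).2
    have hss : π m₀ ⊂ π' m₀ :=
      ⟨hCsub, fun h => hCdisjH i₀ hi₀H (h hi₀m)⟩
    have h1 := Finset.card_lt_card hss
    have h2 := cardS m₀ hm₀K
    simp only [hπdef] at h1
    omega
  · -- core stable
    rintro S ⟨⟨i₁, hi₁⟩, hstr⟩
    have hScl : Clean pref S := by
      intro n hn T hT hnT
      exact cleanFor_of_pref pref hG hBR (hπi n) (hπclean n) hn
        (hstr n hn).1 T hT hnT
    obtain ⟨i₀, hi₀, hmin⟩ :=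
      Finset.exists_min_image S (fun m => idx pref hG m) ⟨i₁, hi₁⟩
    have h1 : (π i₀).card < S.card :=
      card_lt_of_spref pref hG hBR (hπi i₀) (hπclean i₀) hi₀ (hstr i₀ hi₀)
    have h2 : S.card ≤ (maxClean pref (stage pref (idx pref hG i₀))).card :=
      card_le_of_clean pref hG hScl (fun n hn => hmin n hn)
    simp only [hπdef] at h1
    omega
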